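/- For every integer n ≥ 1 there exists a constant C > 0 such that for every nonzero homogeneous polynomial p ∈ ℝ[X, Y] of degree n: ∫₀¹ log|p(s, 1)| ds ≥ log N(p) − C, where N(p) = sup{|p(x, y)| : x² + y² ≤ 1}. (In particular the integral is finite, since for nonzero homogeneous p the polynomial s ↦ p(s, 1) is not identically zero.) -/

import Mathlib

open MeasureTheory

/-- The norm `N(p) = sup {|p(x,y)| : x² + y² ≤ 1}` on polynomials in two real variables. -/
noncomputable def polyBallNorm (p : MvPolynomial (Fin 2) ℝ) : ℝ :=
  sSup {r : ℝ | ∃ x y : ℝ, x ^ 2 + y ^ 2 ≤ 1 ∧ r = |MvPolynomial.eval ![x, y] p|}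

noncomputable def Complex.abs : AbsoluteValue ℂ ℝ where
  toFun z := ‖z‖
  map_mul' := norm_mul
  nonneg' := norm_nonneg
  eq_zero' _ := norm_eq_zero
  add_le' := norm_add_le

@[simp]
lemma Complex.abs_apply (z : ℂ) : Complex.abs z = ‖z‖ := rfl

lemma Complex.abs_ofReal (r : ℝ) : Complex.abs (r : ℂ) = |r| := by
  simp

lemma Complex.abs_re_le_abs (z : ℂ) : |z.re| ≤ Complex.abs z := Complex.abs_re_le_norm z

namespace LogIntegralAux

open Real Set Polynomial

/-! ### Elementary `rpow` facts -/

lemma rpow_half_neg {x : ℝ} (hx : x < 0) : x ^ ((2:ℝ)⁻¹) = 0 := by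
  rw [Real.rpow_def_of_neg hx, show ((2:ℝ)⁻¹ * π) = π/2 by ring, Real.cos_pi_div_two, mul_zero]

lemma rpow_neg_half_neg {x : ℝ} (hx : x < 0) : x ^ (-(2:ℝ)⁻¹) = 0 := by
  rw [Real.rpow_def_of_neg hx, show (-(2:ℝ)⁻¹ * π) = -(π/2) by ring, Real.cos_neg,
    Real.cos_pi_div_two, mul_zero]

lemma rpow_half_nonneg (x : ℝ) : 0 ≤ x ^ ((2:ℝ)⁻¹) := by
  rcases lt_or_ge x 0 with h | h
  · rw [rpow_half_neg h]
  · exact Real.rpow_nonneg h _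

lemma rpow_half_le_two {x : ℝ} (hx : x ≤ 4) : x ^ ((2:ℝ)⁻¹) ≤ 2 := by
  rcases lt_or_ge x 0 with h | h
  · rw [rpow_half_neg h]; norm_num
  · calc x ^ ((2:ℝ)⁻¹) ≤ (4:ℝ) ^ ((2:ℝ)⁻¹) := Real.rpow_le_rpow h hx (by norm_num)
      _ = 2 := by
        rw [show (4:ℝ) = 2 ^ (2:ℕ) by norm_num, ← Real.rpow_natCast 2 2,
          ← Real.rpow_mul (by norm_num)]
        norm_num

lemma two_sub_le_log {w x : ℝ} (hw : 0 < w) (hwx : w ≤ x) :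
    2 - 2 * w ^ (-(2:ℝ)⁻¹) ≤ Real.log x := by
  have hx : 0 < x := hw.trans_le hwx
  have h1 : x ^ (-(2:ℝ)⁻¹) ≤ w ^ (-(2:ℝ)⁻¹) :=
    Real.rpow_le_rpow_of_nonpos hw hwx (by norm_num)
  have h2 : Real.log x = 2 * Real.log (x ^ ((2:ℝ)⁻¹)) := by
    rw [Real.log_rpow hx]; ring
  have h3 : 0 < x ^ ((2:ℝ)⁻¹) := Real.rpow_pos_of_pos hx _
  have h4 : Real.log ((x ^ ((2:ℝ)⁻¹))⁻¹) ≤ (x ^ ((2:ℝ)⁻¹))⁻¹ - 1 :=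
    Real.log_le_sub_one_of_pos (by positivity)
  rw [Real.log_inv] at h4
  rw [(Real.rpow_neg hx.le _).symm] at h4
  linarith

/-! ### The per-root integrable minorant -/

noncomputable def mz (z : ℂ) : ℝ → ℝ :=
  if 2 ≤ Complex.abs z then fun _ => Real.log (Complex.abs z) - Real.log 2
  else fun s => 2 - 2 * ((s - z.re) ^ (-(2:ℝ)⁻¹) + (z.re - s) ^ (-(2:ℝ)⁻¹))

lemma ii_sub_right (t : ℝ) :
    IntervalIntegrable (fun s : ℝ => (s - t) ^ (-(2:ℝ)⁻¹)) volume 0 1 := by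
  have := (intervalIntegral.intervalIntegrable_rpow' (a := -t) (b := 1 - t)
    (r := -(2:ℝ)⁻¹) (by norm_num)).comp_sub_right t
  simpa using this

lemma ii_sub_left (t : ℝ) :
    IntervalIntegrable (fun s : ℝ => (t - s) ^ (-(2:ℝ)⁻¹)) volume 0 1 := by
  have := (intervalIntegral.intervalIntegrable_rpow' (a := t - 1) (b := t)
    (r := -(2:ℝ)⁻¹) (by norm_num)).comp_sub_left t
  simpa using this.symm

lemma ii_mz (z : ℂ) :
    IntervalIntegrable (fun s : ℝ => 2 - 2 * ((s - z.re) ^ (-(2:ℝ)⁻¹) + (z.re - s) ^ (-(2:ℝ)⁻¹)))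
      volume 0 1 := by
  have h1 := ((ii_sub_right z.re).add (ii_sub_left z.re)).const_mul (2:ℝ)
  exact (intervalIntegrable_const (c := (2:ℝ))).sub h1

lemma mz_integrable (z : ℂ) : IntegrableOn (mz z) (Icc (0:ℝ) 1) volume := by
  unfold mz; split_ifs with h
  · exact (integrableOn_const_iff enorm_ne_top).2 (Or.inr (by rw [Real.volume_Icc]; norm_num))
  · exact (intervalIntegrable_iff_integrableOn_Icc_of_le zero_le_one).1 (ii_mz z)

lemma int_rpow_sub (t : ℝ) :
    ∫ s in (0:ℝ)..1, (s - t) ^ (-(2:ℝ)⁻¹) =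
      2 * ((1-t) ^ ((2:ℝ)⁻¹) - (-t) ^ ((2:ℝ)⁻¹)) := by
  rw [intervalIntegral.integral_comp_sub_right (fun u => u ^ (-(2:ℝ)⁻¹)) t]
  rw [integral_rpow (Or.inl (by norm_num))]
  rw [show (-(2:ℝ)⁻¹ + 1) = (2:ℝ)⁻¹ by norm_num, zero_sub]
  ring

lemma int_rpow_sub' (t : ℝ) :
    ∫ s in (0:ℝ)..1, (t - s) ^ (-(2:ℝ)⁻¹) =
      2 * (t ^ ((2:ℝ)⁻¹) - (t-1) ^ ((2:ℝ)⁻¹)) := by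
  rw [intervalIntegral.integral_comp_sub_left (fun u => u ^ (-(2:ℝ)⁻¹)) t]
  rw [integral_rpow (Or.inl (by norm_num))]
  rw [show (-(2:ℝ)⁻¹ + 1) = (2:ℝ)⁻¹ by norm_num]
  ring

lemma mz_integral (z : ℂ) :
    max 0 (Real.log (Complex.abs z)) - 15 ≤ ∫ s in Icc (0:ℝ) 1, mz z s := by
  rw [MeasureTheory.integral_Icc_eq_integral_Ioc,
    ← intervalIntegral.integral_of_le zero_le_one]
  unfold mz; split_ifs with h
  · rw [intervalIntegral.integral_const]
    simp only [smul_eq_mul, sub_zero, one_mul]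
    have h1 : 0 ≤ Real.log (Complex.abs z) := Real.log_nonneg (by linarith)
    rw [max_eq_right h1]
    have h2 : Real.log 2 ≤ 1 := by
      have := Real.log_le_sub_one_of_pos (x := 2) (by norm_num); linarith
    linarith
  · have habs : Complex.abs z < 2 := lt_of_not_ge h
    have ht : |z.re| < 2 := lt_of_le_of_lt (Complex.abs_re_le_abs z) habs
    rw [intervalIntegral.integral_sub intervalIntegrable_const
      (((ii_sub_right z.re).add (ii_sub_left z.re)).const_mul (2:ℝ)),
      intervalIntegral.integral_const_mul,
      intervalIntegral.integral_add (ii_sub_right z.re) (ii_sub_left z.re),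
      int_rpow_sub, int_rpow_sub', intervalIntegral.integral_const]
    have b1 : (1 - z.re) ^ ((2:ℝ)⁻¹) ≤ 2 := rpow_half_le_two (by cases abs_lt.1 ht; linarith)
    have b2 : (z.re) ^ ((2:ℝ)⁻¹) ≤ 2 := rpow_half_le_two (by cases abs_lt.1 ht; linarith)
    have b3 : 0 ≤ (-z.re) ^ ((2:ℝ)⁻¹) := rpow_half_nonneg _
    have b4 : 0 ≤ (z.re - 1) ^ ((2:ℝ)⁻¹) := rpow_half_nonneg _
    have hmax : max 0 (Real.log (Complex.abs z)) ≤ 1 := by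
      have h2 : Real.log 2 ≤ 1 := by
        have := Real.log_le_sub_one_of_pos (x := 2) (by norm_num); linarith
      rcases le_or_gt (Complex.abs z) 1 with hle | hlt
      · have := Real.log_nonpos (Complex.abs.nonneg z) hle
        rw [max_eq_left (by linarith)]; norm_num
      · have h3 : Real.log (Complex.abs z) ≤ Real.log 2 :=
          Real.log_le_log (by linarith) habs.le
        have h4 : 0 ≤ Real.log (Complex.abs z) := Real.log_nonneg hlt.le
        rw [max_eq_right h4]; linarith
    simp only [smul_eq_mul, sub_zero, one_mul]
    linarith

lemma mz_le_log {z : ℂ} {s : ℝ} (hs : s ∈ Icc (0:ℝ) 1) (hsz : s ≠ z.re) :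
    mz z s ≤ Real.log (Complex.abs (↑s - z)) := by
  unfold mz; split_ifs with h
  · have hz0 : (0:ℝ) < Complex.abs z := by linarith
    have h1 : Complex.abs z / 2 ≤ Complex.abs (↑s - z) := by
      have h2 : Complex.abs z - Complex.abs (↑s : ℂ) ≤ Complex.abs (z - ↑s) :=
        Complex.abs.le_sub z ↑s
      rw [Complex.abs.map_sub z ↑s] at h2
      have h3 : Complex.abs (↑s : ℂ) ≤ 1 := by
        rw [Complex.abs_ofReal]; rw [abs_of_nonneg hs.1]; exact hs.2
      linarith
    calc Real.log (Complex.abs z) - Real.log 2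
        = Real.log (Complex.abs z / 2) := (Real.log_div (by linarith) (by norm_num)).symm
      _ ≤ Real.log (Complex.abs (↑s - z)) := Real.log_le_log (by linarith) h1
  · have hw : 0 < |s - z.re| := abs_pos.2 (sub_ne_zero.2 hsz)
    have hle : |s - z.re| ≤ Complex.abs (↑s - z) := by
      have h2 := Complex.abs_re_le_abs (↑s - z)
      simpa [Complex.sub_re, Complex.ofReal_re] using h2
    have hsplit : (s - z.re) ^ (-(2:ℝ)⁻¹) + (z.re - s) ^ (-(2:ℝ)⁻¹)
        = |s - z.re| ^ (-(2:ℝ)⁻¹) := by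
      rcases (sub_ne_zero.2 hsz).lt_or_gt with h' | h'
      · rw [rpow_neg_half_neg h', abs_of_neg h', zero_add]
        norm_num
      · rw [rpow_neg_half_neg (show z.re - s < 0 by linarith), abs_of_pos h', add_zero]
    show 2 - 2 * ((s - z.re) ^ (-(2:ℝ)⁻¹) + (z.re - s) ^ (-(2:ℝ)⁻¹))
        ≤ Real.log (Complex.abs (↑s - z))
    rw [hsplit]
    exact two_sub_le_log hw hle

/-! ### Lists of roots -/

lemma list_integrable (l : List ℂ) :
    IntegrableOn (fun s => (l.map (fun z => mz z s)).sum) (Icc (0:ℝ) 1) volume := by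
  induction l with
  | nil => simp only [List.map_nil, List.sum_nil]; exact (integrableOn_const_iff enorm_ne_top).2 (Or.inl (by simp))
  | cons z l ih =>
      simp only [List.map_cons, List.sum_cons]
      exact (mz_integrable z).add ih

lemma list_integral (l : List ℂ) :
    (l.map (fun z => max 0 (Real.log (Complex.abs z)))).sum - 15 * l.length
      ≤ ∫ s in Icc (0:ℝ) 1, (l.map (fun z => mz z s)).sum := by
  induction l with
  | nil => simp
  | cons z l ih =>
      simp only [List.map_cons, List.sum_cons, List.length_cons]
      rw [show (∫ s in Icc (0:ℝ) 1, (mz z s + (l.map (fun z => mz z s)).sum))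
          = (∫ s in Icc (0:ℝ) 1, mz z s) + ∫ s in Icc (0:ℝ) 1, (l.map (fun z => mz z s)).sum
        from MeasureTheory.integral_add (mz_integrable z) (list_integrable l)]
      have h1 := mz_integral z
      push_cast
      linarith

lemma list_le_log (l : List ℂ) (s : ℝ) (hs : s ∈ Icc (0:ℝ) 1)
    (h : ∀ z ∈ l, s ≠ z.re) :
    0 < (l.map (fun z => Complex.abs (↑s - z))).prod ∧
    (l.map (fun z => mz z s)).sum
      ≤ Real.log ((l.map (fun z => Complex.abs (↑s - z))).prod) := by
  induction l with
  | nil => simp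
  | cons z l ih =>
      have hz := h z List.mem_cons_self
      have hzz : (↑s : ℂ) - z ≠ 0 := by
        intro h0
        apply hz
        have : (↑s : ℂ) = z := by linear_combination h0
        rw [← this, Complex.ofReal_re]
      have hpos : 0 < Complex.abs (↑s - z) := Complex.abs.pos hzz
      obtain ⟨ihp, ihs⟩ := ih (fun w hw => h w (List.mem_cons_of_mem z hw))
      constructor
      · simp only [List.map_cons, List.prod_cons]
        exact mul_pos hpos ihp
      · simp only [List.map_cons, List.prod_cons, List.sum_cons]
        rw [Real.log_mul hpos.ne' ihp.ne']
        exact add_le_add (mz_le_log hs hz) ihs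

lemma list_prod_le (l : List ℂ) {s : ℝ} (hs : s ∈ Icc (0:ℝ) 1) :
    (l.map (fun z => Complex.abs (↑s - z))).prod
      ≤ (l.map (fun z => 1 + Complex.abs z)).prod := by
  induction l with
  | nil => simp
  | cons z l ih =>
      simp only [List.map_cons, List.prod_cons]
      have h1 : Complex.abs (↑s - z) ≤ 1 + Complex.abs z := by
        calc Complex.abs (↑s - z) ≤ Complex.abs (↑s : ℂ) + Complex.abs z :=
              Complex.abs.sub_le_add _ _
          _ ≤ 1 + Complex.abs z := by
              have : Complex.abs (↑s : ℂ) ≤ 1 := by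
                rw [Complex.abs_ofReal, abs_of_nonneg hs.1]; exact hs.2
              linarith
      have h2 : 0 < (l.map (fun z => 1 + Complex.abs z)).prod :=
        List.prod_pos (by
          intro a ha
          obtain ⟨w, _, rfl⟩ := List.mem_map.1 ha
          positivity)
      refine mul_le_mul h1 ih ?_ (by positivity)
      apply List.prod_nonneg
      intro a ha; obtain ⟨w, _, rfl⟩ := List.mem_map.1 ha
      exact Complex.abs.nonneg _

lemma one_le_list_prod_max (l : List ℂ) :
    1 ≤ (l.map (fun z => max 1 (Complex.abs z))).prod := by
  induction l with
  | nil => simp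
  | cons z l ih =>
      simp only [List.map_cons, List.prod_cons]
      nlinarith [le_max_left 1 (Complex.abs z)]

lemma list_prod_ball (l : List ℂ) (t : ℝ) :
    (l.map (fun z => Complex.abs (↑t - z))).prod
      ≤ (Real.sqrt (1 + t^2) * 2) ^ l.length
          * (l.map (fun z => max 1 (Complex.abs z))).prod := by
  induction l with
  | nil => simp
  | cons z l ih =>
      simp only [List.map_cons, List.prod_cons, List.length_cons]
      have hsq : 1 ≤ Real.sqrt (1 + t^2) := by
        have h := Real.sqrt_le_sqrt (show (1:ℝ) ≤ 1 + t^2 by nlinarith)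
        rwa [Real.sqrt_one] at h
      have hmax : 1 ≤ max 1 (Complex.abs z) := le_max_left _ _
      have h1 : Complex.abs (↑t - z) ≤ Real.sqrt (1 + t^2) * 2 * max 1 (Complex.abs z) := by
        have ha : |t| ≤ Real.sqrt (1 + t^2) := by
          rw [← Real.sqrt_sq_eq_abs]
          exact Real.sqrt_le_sqrt (by nlinarith)
        have hb : Complex.abs z ≤ max 1 (Complex.abs z) := le_max_right _ _
        calc Complex.abs (↑t - z) ≤ Complex.abs (↑t : ℂ) + Complex.abs z :=
              Complex.abs.sub_le_add _ _
          _ = |t| + Complex.abs z := by rw [Complex.abs_ofReal]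
          _ ≤ Real.sqrt (1 + t^2) * max 1 (Complex.abs z)
              + Real.sqrt (1 + t^2) * max 1 (Complex.abs z) := by
              have := Complex.abs.nonneg z
              nlinarith
          _ = Real.sqrt (1 + t^2) * 2 * max 1 (Complex.abs z) := by ring
      calc Complex.abs (↑t - z) * (l.map (fun z => Complex.abs (↑t - z))).prod
          ≤ (Real.sqrt (1 + t^2) * 2 * max 1 (Complex.abs z))
              * ((Real.sqrt (1 + t^2) * 2) ^ l.length
                  * (l.map (fun z => max 1 (Complex.abs z))).prod) := by
            refine mul_le_mul h1 ih ?_ (by positivity)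
            apply List.prod_nonneg
            intro a ha; obtain ⟨w, _, rfl⟩ := List.mem_map.1 ha
            exact Complex.abs.nonneg _
        _ = (Real.sqrt (1 + t^2) * 2) ^ (l.length + 1)
              * (max 1 (Complex.abs z) * (l.map (fun z => max 1 (Complex.abs z))).prod) := by
            ring

lemma list_log_max (l : List ℂ) :
    Real.log ((l.map (fun z => max 1 (Complex.abs z))).prod)
      = (l.map (fun z => max 0 (Real.log (Complex.abs z)))).sum := by
  induction l with
  | nil => simp
  | cons z l ih =>
      simp only [List.map_cons, List.prod_cons, List.sum_cons]
      have h2 : 0 < (l.map (fun z => max 1 (Complex.abs z))).prod := by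
        have := one_le_list_prod_max l; linarith
      rw [Real.log_mul (by positivity) h2.ne', ih]
      congr 1
      rcases le_or_gt 1 (Complex.abs z) with h | h
      · rw [max_eq_right h, max_eq_right (Real.log_nonneg h)]
      · rw [max_eq_left h.le, max_eq_left (Real.log_nonpos (Complex.abs.nonneg z) h.le)]
        exact Real.log_one

/-! ### The univariate polynomial `Q p = p(X, 1)` -/

noncomputable def Q (p : MvPolynomial (Fin 2) ℝ) : Polynomial ℝ :=
  MvPolynomial.aeval ![Polynomial.X, 1] p

lemma Q_repr (p : MvPolynomial (Fin 2) ℝ) :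
    Q p = ∑ d ∈ p.support, Polynomial.C (MvPolynomial.coeff d p) * Polynomial.X ^ (d 0) := by
  rw [Q]
  conv_lhs => rw [p.as_sum]
  rw [map_sum]
  refine Finset.sum_congr rfl fun d _ => ?_
  rw [MvPolynomial.aeval_monomial]
  rw [Finsupp.prod_fintype _ _ (fun i => pow_zero _)]
  rw [Fin.prod_univ_two]
  simp [Polynomial.algebraMap_eq]

lemma Q_eval (p : MvPolynomial (Fin 2) ℝ) (t : ℝ) :
    (Q p).eval t = MvPolynomial.eval ![t, 1] p := by
  rw [Q_repr]
  rw [Polynomial.eval_finset_sum]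
  conv_rhs => rw [p.as_sum]
  rw [map_sum]
  refine Finset.sum_congr rfl fun d _ => ?_
  rw [MvPolynomial.eval_monomial]
  rw [Finsupp.prod_fintype _ _ (fun i => pow_zero _)]
  rw [Fin.prod_univ_two]
  simp

section homog
variable {n : ℕ} {p : MvPolynomial (Fin 2) ℝ} (hp : p.IsHomogeneous n)

include hp

lemma support_deg : ∀ d ∈ p.support, d 0 + d 1 = n := by
  intro d hd
  have h1 : d.degree = n := by
    by_contra h
    exact MvPolynomial.mem_support_iff.1 hd (hp.coeff_eq_zero h)
  rw [← h1, Finsupp.degree_apply]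
  rw [Finset.sum_subset (Finset.subset_univ d.support)
    (fun i _ hi => Finsupp.notMem_support_iff.1 hi)]
  rw [Fin.sum_univ_two]

lemma coeffQ (k : ℕ) :
    (Q p).coeff k
      = MvPolynomial.coeff (Finsupp.single 0 k + Finsupp.single 1 (n - k)) p := by
  rw [Q_repr, Polynomial.finset_sum_coeff]
  simp only [Polynomial.coeff_C_mul, Polynomial.coeff_X_pow]
  have hσ0 : (Finsupp.single (0 : Fin 2) k + Finsupp.single (1 : Fin 2) (n - k)) 0 = k := by
    simp [Finsupp.single_apply]
  rw [Finset.sum_eq_single (Finsupp.single (0 : Fin 2) k + Finsupp.single (1 : Fin 2) (n - k))]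
  · rw [hσ0, if_pos rfl, mul_one]
  · intro d hd hne
    rcases eq_or_ne k (d 0) with hk | hk
    · exfalso
      apply hne
      have h1 := support_deg hp d hd
      ext i
      fin_cases i <;> simp [Finsupp.single_apply] <;> omega
    · rw [if_neg hk, mul_zero]
  · intro hns
    rw [MvPolynomial.notMem_support_iff.1 hns, zero_mul]

lemma Q_ne_zero (hp0 : p ≠ 0) : Q p ≠ 0 := by
  obtain ⟨d, hd⟩ := MvPolynomial.ne_zero_iff.1 hp0
  have hds : d ∈ p.support := MvPolynomial.mem_support_iff.2 hd
  have h1 := support_deg hp d hds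
  have hσ : d = Finsupp.single (0 : Fin 2) (d 0) + Finsupp.single (1 : Fin 2) (n - d 0) := by
    ext i; fin_cases i <;> simp [Finsupp.single_apply] <;> omega
  intro h0
  apply hd
  have := coeffQ hp (d 0)
  rw [h0, Polynomial.coeff_zero] at this
  rw [hσ, ← this]

lemma Q_natDegree_le : (Q p).natDegree ≤ n := by
  rw [Q_repr]
  apply Polynomial.natDegree_sum_le_of_forall_le
  intro d hd
  refine (Polynomial.natDegree_C_mul_le _ _).trans ?_
  rw [Polynomial.natDegree_X_pow]
  have := support_deg hp d hd
  omega

lemma eval_smul (c : ℝ) (v : Fin 2 → ℝ) :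
    MvPolynomial.eval (c • v) p = c ^ n * MvPolynomial.eval v p := by
  conv_lhs => rw [p.as_sum]
  conv_rhs => rw [p.as_sum]
  rw [map_sum, map_sum, Finset.mul_sum]
  refine Finset.sum_congr rfl fun d hd => ?_
  rw [MvPolynomial.eval_monomial, MvPolynomial.eval_monomial]
  rw [Finsupp.prod_fintype _ _ (fun i => pow_zero _),
    Finsupp.prod_fintype _ _ (fun i => pow_zero _)]
  rw [Fin.prod_univ_two, Fin.prod_univ_two]
  simp only [Pi.smul_apply, smul_eq_mul]
  have h1 := support_deg hp d hd
  rw [← h1, pow_add]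
  ring

lemma eval_x0 (x : ℝ) :
    MvPolynomial.eval ![x, 0] p
      = MvPolynomial.coeff (Finsupp.single (0 : Fin 2) n) p * x ^ n := by
  conv_lhs => rw [p.as_sum]
  rw [map_sum]
  have hrw : ∀ d ∈ p.support,
      MvPolynomial.eval ![x, 0] (MvPolynomial.monomial d (MvPolynomial.coeff d p))
        = MvPolynomial.coeff d p * (x ^ (d 0) * (0:ℝ) ^ (d 1)) := by
    intro d _
    rw [MvPolynomial.eval_monomial]
    rw [Finsupp.prod_fintype _ _ (fun i => pow_zero _)]
    rw [Fin.prod_univ_two]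
    simp
  rw [Finset.sum_congr rfl hrw]
  rw [Finset.sum_eq_single (Finsupp.single (0 : Fin 2) n)]
  · simp [Finsupp.single_apply]
  · intro d hd hne
    have h1 := support_deg hp d hd
    have h2 : d 1 ≠ 0 := by
      intro h2
      apply hne
      ext i; fin_cases i <;> simp [Finsupp.single_apply] <;> omega
    rw [zero_pow h2, mul_zero, mul_zero]
  · intro hns
    rw [MvPolynomial.notMem_support_iff.1 hns, zero_mul]

end homog

/-! ### Factorisation over `ℂ` -/

lemma exists_list (q : Polynomial ℝ) (hq : q ≠ 0) :
    ∃ l : List ℂ, l.length ≤ q.natDegree ∧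
      ∀ t : ℝ, |q.eval t|
        = |q.leadingCoeff| * (l.map fun z => Complex.abs (↑t - z)).prod := by
  set i := algebraMap ℝ ℂ with hi
  set qC := q.map i with hqC
  have hqC0 : qC ≠ 0 := Polynomial.map_ne_zero hq
  have hsplits : (q.map i).Splits := IsAlgClosed.splits _
  have hfact : q.map i = C (i q.leadingCoeff) * ((q.map i).roots.map fun a => X - C a).prod := by
    conv_lhs => rw [hsplits.eq_prod_roots]
    rw [Polynomial.leadingCoeff_map]
  refine ⟨qC.roots.toList, ?_, ?_⟩
  · rw [Multiset.length_toList]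
    calc Multiset.card qC.roots ≤ qC.natDegree := qC.card_roots'
      _ = q.natDegree := Polynomial.natDegree_map i
  · intro t
    have h1 : ((q.eval t : ℝ) : ℂ) = qC.eval (↑t : ℂ) := by
      rw [hqC, Polynomial.eval_map]
      have := Polynomial.eval₂_at_apply (p := q) i t
      rw [show ((t:ℂ)) = i t by simp [hi]]
      rw [this]
      simp [hi]
    have h2 : |q.eval t| = Complex.abs ((q.eval t : ℝ) : ℂ) := (Complex.abs_ofReal _).symm
    rw [h2, h1]
    conv_lhs => rw [hqC, hfact, ← hqC]
    rw [Polynomial.eval_mul, Polynomial.eval_C, Polynomial.eval_multiset_prod]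
    rw [Multiset.map_map]
    rw [map_mul Complex.abs]
    have h3 : Complex.abs (i q.leadingCoeff) = |q.leadingCoeff| := by
      simp [hi]
    rw [h3]
    congr 1
    rw [map_multiset_prod Complex.abs]
    rw [Multiset.map_map]
    have h4 : ((⇑Complex.abs ∘ Polynomial.eval (↑t : ℂ) ∘ fun a => Polynomial.X - Polynomial.C a)
        : ℂ → ℝ) = fun z => Complex.abs (↑t - z) := by
      funext z; simp
    rw [h4]
    conv_lhs => rw [← Multiset.coe_toList qC.roots, Multiset.map_coe, Multiset.prod_coe]

end LogIntegralAux

open LogIntegralAux Polynomial Set in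
/-- **(Lower bound in the proof of Claim 4.12.)**
For every `n ≥ 1` there is `C > 0` such that for every nonzero homogeneous polynomial `p`
of degree `n` in two real variables,
`∫₀¹ log |p(s, 1)| ds ≥ log N(p) − C`. -/
theorem log_integral_lower_bound (n : ℕ) (hn : 1 ≤ n) :
    ∃ C > (0 : ℝ), ∀ p : MvPolynomial (Fin 2) ℝ, p ≠ 0 → p.IsHomogeneous n →
      ∫ s in Set.Icc (0 : ℝ) 1, Real.log |MvPolynomial.eval ![s, 1] p| ≥
        Real.log (polyBallNorm p) - C := by
  have hn1 : (1:ℝ) ≤ n := by exact_mod_cast hn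
  refine ⟨n * Real.log 2 + 15 * n, by nlinarith [Real.log_pos (show (1:ℝ) < 2 by norm_num)], ?_⟩
  intro p hp0 hp
  set q := Q p with hq
  have hQne : q ≠ 0 := Q_ne_zero hp hp0
  obtain ⟨l, hlen, heval⟩ := exists_list q hQne
  have hlen' : l.length ≤ n := hlen.trans (Q_natDegree_le hp)
  set c := q.leadingCoeff with hc
  have hc0 : c ≠ 0 := Polynomial.leadingCoeff_ne_zero.2 hQne
  have hcpos : 0 < |c| := abs_pos.2 hc0
  set S : ℝ := (l.map (fun z => max 0 (Real.log (Complex.abs z)))).sum with hS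
  set P : ℝ := (l.map (fun z => max 1 (Complex.abs z))).prod with hP
  have hP1 : 1 ≤ P := one_le_list_prod_max l
  set M : ℝ := |c| * P with hM
  have hMpos : 0 < M := mul_pos hcpos (by linarith)
  have hlogM : Real.log M = Real.log |c| + S := by
    rw [hM, Real.log_mul hcpos.ne' (by linarith), hP, list_log_max l, hS]
  have h2n : (1:ℝ) ≤ 2 ^ n := one_le_pow₀ (by norm_num)
  -- pointwise bound on the closed unit ball
  have hball : ∀ x y : ℝ, x^2 + y^2 ≤ 1 → |MvPolynomial.eval ![x,y] p| ≤ 2^n * M := by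
    intro x y hxy
    rcases eq_or_ne y 0 with rfl | hy
    · rw [eval_x0 hp]
      have hx1 : |x| ≤ 1 := by
        nlinarith [abs_nonneg x, sq_abs x]
      have hcoeff : MvPolynomial.coeff (Finsupp.single (0:Fin 2) n) p = q.coeff n := by
        have h := coeffQ hp (k := n)
        rw [Nat.sub_self, Finsupp.single_zero, add_zero] at h
        exact h.symm
      rw [abs_mul, abs_pow, hcoeff]
      have hb : |q.coeff n| ≤ M := by
        rcases eq_or_ne q.natDegree n with hdeg | hdeg
        · have hcn : q.coeff n = c := by rw [hc, Polynomial.leadingCoeff, hdeg]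
          rw [hcn, hM]
          nlinarith
        · rw [Polynomial.coeff_eq_zero_of_natDegree_lt
            (lt_of_le_of_ne (Q_natDegree_le hp) hdeg), abs_zero]
          positivity
      calc |q.coeff n| * |x|^n ≤ M * 1 :=
            mul_le_mul hb (pow_le_one₀ (abs_nonneg x) hx1) (by positivity) hMpos.le
        _ = M := mul_one M
        _ ≤ 2^n * M := by nlinarith
    · set t := x / y with ht
      have hsmul : ![x, y] = y • ![t, 1] := by
        funext i; fin_cases i
        · show x = y * t
          rw [ht]; field_simp
        · show y = y * 1
          rw [mul_one]
      rw [hsmul, eval_smul hp, abs_mul, abs_pow, ← Q_eval, ← hq, heval t]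
      set A := Real.sqrt (1 + t^2) with hA
      have hA0 : (0:ℝ) ≤ A := Real.sqrt_nonneg _
      have hy1 : |y| ≤ 1 := by nlinarith [abs_nonneg y, sq_abs y, sq_nonneg x]
      have h1 : |y| * A ≤ 1 := by
        have e0 : |y| = Real.sqrt (y^2) := (Real.sqrt_sq_eq_abs y).symm
        rw [e0, hA, ← Real.sqrt_mul (sq_nonneg y)]
        have heq : y^2 * (1 + t^2) = y^2 + x^2 := by
          rw [ht]; field_simp <;> ring
        rw [heq]
        have h2 := Real.sqrt_le_sqrt (show y^2 + x^2 ≤ 1 by linarith)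
        rwa [Real.sqrt_one] at h2
      set L := l.length with hL
      have hyA : |y|^n * A^L ≤ 1 := by
        have e1 : |y|^n = |y|^(n-L) * |y|^L := by rw [← pow_add, Nat.sub_add_cancel hlen']
        have e3 : (|y| * A)^L ≤ 1 := pow_le_one₀ (by positivity) h1
        have e4 : |y|^(n-L) ≤ 1 := pow_le_one₀ (abs_nonneg y) hy1
        calc |y|^n * A^L = |y|^(n-L) * ((|y| * A)^L) := by rw [e1, mul_pow]; ring
          _ ≤ 1 * 1 := mul_le_mul e4 e3 (by positivity) (by positivity)
          _ = 1 := mul_one 1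
      calc |y|^n * (|c| * (l.map fun z => Complex.abs (↑t - z)).prod)
          ≤ |y|^n * (|c| * ((A*2)^L * P)) := by
            refine mul_le_mul_of_nonneg_left ?_ (by positivity)
            refine mul_le_mul_of_nonneg_left ?_ hcpos.le
            rw [hP, hA, hL]
            exact list_prod_ball l t
        _ = (|y|^n * A^L) * (2^L * M) := by rw [hM, mul_pow A 2 L]; ring
        _ ≤ 1 * (2^L * M) := by
            refine mul_le_mul_of_nonneg_right hyA (by positivity)
        _ = 2^L * M := one_mul _
        _ ≤ 2^n * M := by
            refine mul_le_mul_of_nonneg_right ?_ hMpos.le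
            exact pow_le_pow_right₀ (by norm_num) hlen'
  -- the sup is positive and bounded
  have hne : |MvPolynomial.eval ![(0:ℝ), 0] p|
      ∈ {r : ℝ | ∃ x y : ℝ, x ^ 2 + y ^ 2 ≤ 1 ∧ r = |MvPolynomial.eval ![x, y] p|} :=
    ⟨0, 0, by norm_num, rfl⟩
  have hub : ∀ r ∈ {r : ℝ | ∃ x y : ℝ, x ^ 2 + y ^ 2 ≤ 1 ∧ r = |MvPolynomial.eval ![x, y] p|},
      r ≤ 2^n * M := by
    rintro r ⟨x, y, hxy, rfl⟩
    exact hball x y hxy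
  have hNle : polyBallNorm p ≤ 2^n * M := csSup_le ⟨_, hne⟩ hub
  have hNpos : 0 < polyBallNorm p := by
    obtain ⟨t0, ht0⟩ : ∃ t0 : ℝ, q.eval t0 ≠ 0 := by
      obtain ⟨t0, ht0⟩ := q.exists_eval_ne_zero_of_natDegree_lt_card hQne
        ((Cardinal.nat_lt_aleph0 _).trans_le (Cardinal.aleph0_le_mk ℝ))
      exact ⟨t0, ht0⟩
    set r0 := Real.sqrt (1 + t0^2) with hr0
    have hr1 : 1 ≤ r0 := by
      have h := Real.sqrt_le_sqrt (show (1:ℝ) ≤ 1 + t0^2 by nlinarith)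
      rwa [Real.sqrt_one] at h
    have hr0pos : 0 < r0 := by linarith
    have hr0sq : r0^2 = 1 + t0^2 := Real.sq_sqrt (by nlinarith)
    have hpoint : (t0/r0)^2 + (1/r0)^2 ≤ 1 := by
      rw [div_pow, div_pow]
      rw [show t0^2/r0^2 + 1^2/r0^2 = (t0^2 + 1)/r0^2 by ring]
      rw [hr0sq]
      rw [div_le_one (by nlinarith)]
      linarith
    have hsm : ![t0/r0, 1/r0] = r0⁻¹ • ![t0, 1] := by
      funext i; fin_cases i
      · show t0/r0 = r0⁻¹ * t0
        rw [inv_mul_eq_div, div_eq_div_iff hr0pos.ne' hr0pos.ne']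
      · show 1/r0 = r0⁻¹ * 1
        rw [mul_one, one_div]
    have hvne : MvPolynomial.eval ![t0/r0, 1/r0] p ≠ 0 := by
      rw [hsm, eval_smul hp, ← Q_eval, ← hq]
      exact mul_ne_zero (pow_ne_zero _ (inv_ne_zero hr0pos.ne')) ht0
    have hmem : |MvPolynomial.eval ![t0/r0, 1/r0] p|
        ∈ {r : ℝ | ∃ x y : ℝ, x ^ 2 + y ^ 2 ≤ 1 ∧ r = |MvPolynomial.eval ![x, y] p|} :=
      ⟨t0/r0, 1/r0, hpoint, rfl⟩
    calc (0:ℝ) < |MvPolynomial.eval ![t0/r0, 1/r0] p| := abs_pos.2 hvne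
      _ ≤ polyBallNorm p := le_csSup ⟨2^n * M, hub⟩ hmem
  -- the integral
  have hFeq : (fun s : ℝ => Real.log |MvPolynomial.eval ![s, 1] p|)
      = fun s => Real.log |q.eval s| := by
    funext s; rw [hq, Q_eval]
  rw [ge_iff_le, hFeq]
  set F : ℝ → ℝ := fun s => Real.log |q.eval s| with hF
  set m : ℝ → ℝ := fun s => Real.log |c| + (l.map (fun z => mz z s)).sum with hmdef
  have hconst_int : IntegrableOn (fun _ : ℝ => Real.log |c|) (Icc (0:ℝ) 1) volume :=
    (integrableOn_const_iff enorm_ne_top).2 (Or.inr measure_Icc_lt_top)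
  have hm_int : IntegrableOn m (Icc (0:ℝ) 1) volume := hconst_int.add (list_integrable l)
  have hae : ∀ᵐ s ∂(volume.restrict (Icc (0:ℝ) 1)), ∀ z ∈ l, s ≠ z.re := by
    apply ae_restrict_of_ae
    have hfin : ({s : ℝ | ¬ ∀ z ∈ l, s ≠ z.re}).Finite := by
      apply Set.Finite.subset (l.map Complex.re).finite_toSet
      intro s hs
      simp only [Set.mem_setOf_eq, not_forall] at hs
      obtain ⟨z, hz, hsz⟩ := hs
      have : s = z.re := not_not.1 hsz
      simp only [List.coe_toFinset, Set.mem_setOf_eq, List.mem_map]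
      exact ⟨z, hz, this.symm⟩
    rw [MeasureTheory.ae_iff]
    exact hfin.measure_zero volume
  have haemem : ∀ᵐ s ∂(volume.restrict (Icc (0:ℝ) 1)), s ∈ Icc (0:ℝ) 1 :=
    ae_restrict_mem measurableSet_Icc
  have hle : m ≤ᵐ[volume.restrict (Icc (0:ℝ) 1)] F := by
    filter_upwards [hae, haemem] with s hs hmem
    obtain ⟨hp1, hp2⟩ := list_le_log l s hmem hs
    show Real.log |c| + (l.map (fun z => mz z s)).sum ≤ Real.log |q.eval s|
    rw [heval s, Real.log_mul hcpos.ne' hp1.ne']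
    exact (add_le_add_iff_left _).2 hp2
  have hBpos : 0 < |c| * (l.map (fun z => 1 + Complex.abs z)).prod := by
    refine mul_pos hcpos (List.prod_pos ?_)
    intro a ha
    obtain ⟨w, _, rfl⟩ := List.mem_map.1 ha
    positivity
  set K : ℝ := max 0 (Real.log (|c| * (l.map (fun z => 1 + Complex.abs z)).prod)) with hK
  have hub2 : ∀ᵐ s ∂(volume.restrict (Icc (0:ℝ) 1)), F s ≤ K := by
    filter_upwards [haemem] with s hmem
    show Real.log |q.eval s| ≤ K
    rcases eq_or_ne (q.eval s) 0 with h0 | h0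
    · rw [h0, abs_zero, Real.log_zero]; exact le_max_left _ _
    · refine le_trans ?_ (le_max_right _ _)
      apply Real.log_le_log (abs_pos.2 h0)
      rw [heval s]
      exact mul_le_mul_of_nonneg_left (list_prod_le l hmem) hcpos.le
  have hFmeas : AEStronglyMeasurable F (volume.restrict (Icc (0:ℝ) 1)) := by
    apply Measurable.aestronglyMeasurable
    exact Real.measurable_log.comp (continuous_abs.comp q.continuous).measurable
  have hg_int : IntegrableOn (fun s => |m s| + |K|) (Icc (0:ℝ) 1) volume :=
    hm_int.abs.add ((integrableOn_const_iff enorm_ne_top).2 (Or.inr measure_Icc_lt_top))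
  have hF_int : IntegrableOn F (Icc (0:ℝ) 1) volume := by
    refine MeasureTheory.Integrable.mono' hg_int hFmeas ?_
    filter_upwards [hle, hub2] with s h1 h2
    rw [Real.norm_eq_abs, abs_le]
    constructor
    · have h3 : -|m s| ≤ m s := neg_abs_le _
      have h4 : 0 ≤ |K| := abs_nonneg K
      linarith
    · have h5 : K ≤ |K| := le_abs_self K
      have h6 : 0 ≤ |m s| := abs_nonneg (m s)
      linarith
  have hmono := MeasureTheory.integral_mono_ae hm_int hF_int hle
  have hmint : ∫ s in Icc (0:ℝ) 1, m s
      = Real.log |c| + ∫ s in Icc (0:ℝ) 1, (l.map (fun z => mz z s)).sum := by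
    show (∫ s in Icc (0:ℝ) 1, (Real.log |c| + (l.map (fun z => mz z s)).sum)) = _
    rw [MeasureTheory.integral_add hconst_int (list_integrable l)]
    congr 1
    rw [MeasureTheory.setIntegral_const, Real.volume_real_Icc]
    norm_num
  have hlist := list_integral l
  have h15 : (15:ℝ) * l.length ≤ 15 * n := by
    have := (Nat.cast_le (α := ℝ)).2 hlen'
    linarith
  have hchain : Real.log |c| + S - 15 * n ≤ ∫ s in Icc (0:ℝ) 1, F s := by
    have h1 : Real.log |c| + (S - 15 * l.length) ≤ ∫ s in Icc (0:ℝ) 1, m s := by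
      rw [hmint, hS]
      have := hlist
      linarith
    linarith [hmono]
  have hlogN : Real.log (polyBallNorm p) ≤ n * Real.log 2 + (Real.log |c| + S) := by
    calc Real.log (polyBallNorm p) ≤ Real.log (2^n * M) := Real.log_le_log hNpos hNle
      _ = Real.log ((2:ℝ)^n) + Real.log M := Real.log_mul (by positivity) hMpos.ne'
      _ = n * Real.log 2 + (Real.log |c| + S) := by rw [Real.log_pow, hlogM]
  linarith [hchain, hlogN]
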